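/- arXiv:1312.3203 — 3 statements merged into one kernel-verified Lean document; each statement's English description precedes it below -/
import Mathlib

section
/- Suppose â: 𝕋 → ℝ is continuous, symmetric (â(ξ) = â(1−ξ)), and strictly decreasing on [0, 1/2]. Then for ξ ∈ 𝕋, the m×m Vandermonde matrix 𝒜_m(ξ), whose (j,l) entry is â((ξ+l)/m)^j for j,l = 0,…,m−1, is singular if and only if ξ ∈ {0, 1/2}. -/
/-- On `[0,1)`, a symmetric strictly-decreasing-on-`[0,1/2]` function takes equal values
exactly at equal or reflected points. -/
lemma a_eq_iff_aux (a : ℝ → ℝ)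
    (hsymm : ∀ ξ : ℝ, a (1 - ξ) = a ξ)
    (hdec : StrictAntiOn a (Set.Icc 0 (1 / 2)))
    {s t : ℝ} (hs : s ∈ Set.Ico (0 : ℝ) 1) (ht : t ∈ Set.Ico (0 : ℝ) 1) :
    a s = a t ↔ s = t ∨ s + t = 1 := by
  obtain ⟨hs0, hs1⟩ := hs
  obtain ⟨ht0, ht1⟩ := ht
  have hinj := hdec.injOn
  constructor
  · intro h
    by_cases hs2 : s ≤ 1 / 2 <;> by_cases ht2 : t ≤ 1 / 2
    · left
      exact hinj ⟨hs0, hs2⟩ ⟨ht0, ht2⟩ h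
    · right
      have h1t : (1 - t) ∈ Set.Icc (0 : ℝ) (1 / 2) := ⟨by linarith, by linarith⟩
      have : a s = a (1 - t) := by rw [hsymm t]; exact h
      have := hinj ⟨hs0, hs2⟩ h1t this
      linarith
    · right
      have h1s : (1 - s) ∈ Set.Icc (0 : ℝ) (1 / 2) := ⟨by linarith, by linarith⟩
      have : a (1 - s) = a t := by rw [hsymm s]; exact h
      have := hinj h1s ⟨ht0, ht2⟩ this
      linarith
    · left
      have h1s : (1 - s) ∈ Set.Icc (0 : ℝ) (1 / 2) := ⟨by linarith, by linarith⟩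
      have h1t : (1 - t) ∈ Set.Icc (0 : ℝ) (1 / 2) := ⟨by linarith, by linarith⟩
      have : a (1 - s) = a (1 - t) := by rw [hsymm s, hsymm t]; exact h
      have := hinj h1s h1t this
      linarith
  · rintro (rfl | hsum)
    · rfl
    · have : s = 1 - t := by linarith
      rw [this, hsymm t]

/-- If `â : 𝕋 → ℝ` (realized as a `1`-periodic function on `ℝ`) is continuous,
symmetric (`â(1-ξ) = â(ξ)`) and strictly decreasing on `[0,1/2]`, then for `ξ ∈ [0,1)` the
`m × m` Vandermonde matrix `𝒜_m(ξ)` with `(j,l)` entry `â((ξ+l)/m)^j` is singular iff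
`ξ ∈ {0, 1/2}`.  (We require `m ≥ 3`, as needed for both singular points to occur.) -/
theorem vandermonde_nodes_singular_iff (m : ℕ) (hm : 3 ≤ m) (a : ℝ → ℝ)
    (hcont : Continuous a) (hper : Function.Periodic a 1)
    (hsymm : ∀ ξ : ℝ, a (1 - ξ) = a ξ)
    (hdec : StrictAntiOn a (Set.Icc 0 (1 / 2)))
    (ξ : ℝ) (hξ : ξ ∈ Set.Ico (0 : ℝ) 1) :
    (Matrix.of fun j l : Fin m => (a ((ξ + (l : ℕ)) / m)) ^ (j : ℕ)).det = 0 ↔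
      ξ = 0 ∨ ξ = 1 / 2 := by
  obtain ⟨hξ0, hξ1⟩ := hξ
  have hm0 : (0 : ℝ) < m := by positivity
  set v : Fin m → ℝ := fun l => a ((ξ + (l : ℕ)) / m) with hv
  have hM : (Matrix.of fun j l : Fin m => (a ((ξ + (l : ℕ)) / m)) ^ (j : ℕ))
      = Matrix.transpose (Matrix.vandermonde v) := by
    ext j l
    simp [Matrix.vandermonde, Matrix.transpose_apply, hv]
  rw [hM, Matrix.det_transpose]
  have hmem : ∀ l : Fin m, (ξ + (l : ℕ)) / m ∈ Set.Ico (0 : ℝ) 1 := by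
    intro l
    have hl : ((l : ℕ) : ℝ) < m := by exact_mod_cast l.isLt
    constructor
    · positivity
    · rw [div_lt_one hm0]
      have : ((l : ℕ) : ℝ) ≤ m - 1 := by
        have : (l : ℕ) ≤ m - 1 := Nat.le_sub_one_of_lt l.isLt
        calc ((l : ℕ) : ℝ) ≤ ((m - 1 : ℕ) : ℝ) := by exact_mod_cast this
          _ = (m : ℝ) - 1 := by
            have : 1 ≤ m := by omega
            push_cast [Nat.cast_sub this]; ring
      linarith
  have key : (Matrix.vandermonde v).det = 0 ↔ ¬ Function.Injective v := by
    constructor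
    · intro h hinj
      exact (Matrix.det_vandermonde_ne_zero_iff.mpr hinj) h
    · intro h
      by_contra hd
      exact h (Matrix.det_vandermonde_ne_zero_iff.mp hd)
  rw [key]
  constructor
  · intro h
    simp only [Function.Injective, not_forall] at h
    obtain ⟨l, l', hvll, hll⟩ := h
    have := (a_eq_iff_aux a hsymm hdec (hmem l) (hmem l')).mp hvll
    rcases this with heq | hsum
    · exfalso
      apply hll
      have h' : ξ + ((l : ℕ) : ℝ) = ξ + ((l' : ℕ) : ℝ) := by
        have := heq
        rw [div_eq_div_iff (ne_of_gt hm0) (ne_of_gt hm0)] at this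
        exact mul_right_cancel₀ (ne_of_gt hm0) this
      have : (l : ℕ) = (l' : ℕ) := by
        have : ((l : ℕ) : ℝ) = ((l' : ℕ) : ℝ) := by linarith
        exact_mod_cast this
      exact Fin.ext this
    · -- 2ξ + l + l' = m
      have h2 : 2 * ξ + (l : ℕ) + (l' : ℕ) = (m : ℝ) := by
        field_simp at hsum
        linarith
      set n : ℕ := (l : ℕ) + (l' : ℕ) with hn
      have hnr : 2 * ξ = (m : ℝ) - n := by push_cast [hn]; linarith
      have h1 : (n : ℝ) ≤ m := by linarith
      have h2' : (m : ℝ) < n + 2 := by linarith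
      have h1n : n ≤ m := by exact_mod_cast h1
      have h2n : m < n + 2 := by exact_mod_cast h2'
      rcases (by omega : m = n ∨ m = n + 1) with hc | hc
      · left
        have : (m : ℝ) = n := by exact_mod_cast hc
        linarith
      · right
        have : (m : ℝ) = n + 1 := by exact_mod_cast hc
        linarith
  · rintro (rfl | rfl) <;> intro hinj
    · have e1 : ((⟨1, by omega⟩ : Fin m) : ℕ) = 1 := rfl
      have e2 : ((⟨m - 1, by omega⟩ : Fin m) : ℕ) = m - 1 := rfl
      have hval : v ⟨1, by omega⟩ = v ⟨m - 1, by omega⟩ := by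
        apply (a_eq_iff_aux a hsymm hdec (hmem _) (hmem _)).mpr
        right
        rw [e1, e2]
        have : ((m - 1 : ℕ) : ℝ) = (m : ℝ) - 1 := by
          push_cast [Nat.cast_sub (by omega : 1 ≤ m)]; ring
        rw [this]
        field_simp
        linarith [show ((1 : ℕ) : ℝ) = 1 from Nat.cast_one]
      have := hinj hval
      rw [Fin.mk.injEq] at this
      omega
    · have e1 : ((⟨0, by omega⟩ : Fin m) : ℕ) = 0 := rfl
      have e2 : ((⟨m - 1, by omega⟩ : Fin m) : ℕ) = m - 1 := rfl
      have hval : v ⟨0, by omega⟩ = v ⟨m - 1, by omega⟩ := by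
        apply (a_eq_iff_aux a hsymm hdec (hmem _) (hmem _)).mpr
        right
        rw [e1, e2]
        have : ((m - 1 : ℕ) : ℝ) = (m : ℝ) - 1 := by
          push_cast [Nat.cast_sub (by omega : 1 ≤ m)]; ring
        rw [this]
        field_simp
        ring
      have := hinj hval
      rw [Fin.mk.injEq] at this
      omega
end

section
/- Let m be an odd positive integer. The matrix B of size (m−1)/2 × (m−1)/2 with entries B(c,j) = sin(2πcj/m), for c, j = 1,…,(m−1)/2, is invertible. -/
open Finset Real Matrix
set_option maxHeartbeats 1000000

private lemma full_cos_sum (m : ℕ) (hm : 0 < m) (k : ℤ) (hk : ¬ ((m:ℤ) ∣ k)) :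
    ∑ j ∈ Finset.range m, Real.cos (2 * π * k * j / m) = 0 := by
  have hm' : (m:ℂ) ≠ 0 := by exact_mod_cast hm.ne'
  set z : ℂ := Complex.exp (2 * π * Complex.I * k / m) with hz
  have hz1 : z ≠ 1 := by
    intro h
    rw [hz, Complex.exp_eq_one_iff] at h
    obtain ⟨t, ht⟩ := h
    apply hk
    refine ⟨t, ?_⟩
    have hpi : (2:ℂ) * π * Complex.I ≠ 0 := by
      simp [Real.pi_ne_zero, Complex.I_ne_zero]
    have h2 : (k:ℂ) = m * t := by
      field_simp at ht
      have : (2:ℂ) * π * Complex.I * k = 2 * π * Complex.I * (m * t) := by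
        rw [ht]
      exact mul_left_cancel₀ hpi this
    exact_mod_cast h2
  have hzm : z ^ m = 1 := by
    rw [hz, ← Complex.exp_nat_mul]
    have : (m:ℂ) * (2 * π * Complex.I * k / m) = k * (2 * π * Complex.I) := by
      field_simp
    rw [this, Complex.exp_int_mul_two_pi_mul_I]
  have hsum : ∑ j ∈ Finset.range m, z ^ j = 0 := by
    rw [geom_sum_eq hz1, hzm]; simp
  have hre : ∀ j : ℕ, Real.cos (2 * π * k * j / m) = (z ^ j).re := by
    intro j
    rw [hz, ← Complex.exp_nat_mul]
    have h2 : (j:ℂ) * (2 * π * Complex.I * k / m) = ((2 * π * k * j / m : ℝ) : ℂ) * Complex.I := by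
      push_cast
      field_simp
    rw [h2, Complex.exp_ofReal_mul_I_re]
  calc ∑ j ∈ Finset.range m, Real.cos (2 * π * k * j / m)
      = (∑ j ∈ Finset.range m, z ^ j).re := by
        rw [Complex.re_sum]; exact Finset.sum_congr rfl fun j _ => hre j
    _ = 0 := by rw [hsum]; simp

private lemma half_cos_sum (n : ℕ) (k : ℤ) (hk : ¬ (((2*n+1 : ℕ):ℤ) ∣ k)) :
    ∑ j ∈ Finset.range n, Real.cos (2 * π * k * (j+1) / (2*n+1 : ℕ)) = -(1/2) := by
  have hm : 0 < 2*n+1 := by omega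
  have key := full_cos_sum (2*n+1) hm k hk
  set m : ℕ := 2*n+1 with hmdef
  have hmR : (0:ℝ) < (m:ℝ) := by exact_mod_cast hm
  -- periodicity: cos(2πk(m-i)/m) = cos(2πki/m) for i ≤ m
  have per : ∀ i : ℕ, i ≤ m → Real.cos (2 * π * k * ((m:ℝ) - i) / m) = Real.cos (2 * π * k * i / m) := by
    intro i hi
    have harg : 2 * π * k * ((m:ℝ) - i) / m = (k:ℝ) * (2 * π) - 2 * π * k * i / m := by
      field_simp
    rw [harg, Real.cos_sub, Real.cos_int_mul_two_pi]
    have hsin : Real.sin ((k:ℝ) * (2 * π)) = 0 := by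
      have : (k:ℝ) * (2 * π) = (2*k : ℤ) * π := by push_cast; ring
      rw [this, Real.sin_int_mul_pi]
    rw [hsin]; ring
  -- split the full sum
  have hsplit : ∑ j ∈ Finset.range m, Real.cos (2 * π * k * j / m)
      = (∑ j ∈ Finset.range (2*n), Real.cos (2 * π * k * (j+1) / m)) + 1 := by
    rw [show m = 2*n + 1 from rfl, Finset.sum_range_succ' (fun j => Real.cos (2 * π * k * j / m)) (2*n)]
    push_cast
    simp
    simp [hmdef]
  have hsplit2 : ∑ j ∈ Finset.range (2*n), Real.cos (2 * π * k * (j+1) / m)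
      = (∑ j ∈ Finset.range n, Real.cos (2 * π * k * (j+1) / m))
        + ∑ j ∈ Finset.range n, Real.cos (2 * π * k * (n+j+1) / m) := by
    rw [show 2*n = n + n by ring, Finset.sum_range_add]
    congr 1
    refine Finset.sum_congr rfl fun j _ => ?_
    norm_num [add_assoc]
  have hsecond : ∑ j ∈ Finset.range n, Real.cos (2 * π * k * (n+j+1) / m)
      = ∑ j ∈ Finset.range n, Real.cos (2 * π * k * (j+1) / m) := by
    rw [← Finset.sum_range_reflect (fun j => Real.cos (2 * π * k * (j+1) / m)) n]
    refine Finset.sum_congr rfl fun j hj => ?_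
    rw [Finset.mem_range] at hj
    have hc1 : ((n - 1 - j : ℕ):ℝ) + 1 = (n:ℝ) - j := by
      have e : (n - 1 - j : ℕ) = n - (j+1) := by omega
      rw [e, Nat.cast_sub (by omega : j + 1 ≤ n)]
      push_cast; ring
    have hc2 : ((n - j : ℕ):ℝ) = (n:ℝ) - j := by
      push_cast [Nat.cast_sub hj.le]; ring
    have h1 : (n:ℝ) + j + 1 = (m:ℝ) - ((n - j : ℕ):ℝ) := by
      rw [hc2]
      have : (m:ℝ) = 2*n+1 := by rw [hmdef]; push_cast; ring
      rw [this]; ring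
    calc Real.cos (2 * π * k * ((n:ℝ)+j+1) / m)
        = Real.cos (2 * π * k * ((m:ℝ) - ((n-j:ℕ):ℝ)) / m) := by rw [h1]
      _ = Real.cos (2 * π * k * ((n-j:ℕ):ℝ) / m) := per (n-j) (by omega)
      _ = Real.cos (2 * π * k * (((n-1-j:ℕ):ℝ) + 1) / m) := by rw [hc1, hc2]
  have target := key
  rw [hsplit, hsplit2, hsecond] at target
  linarith [target]

private lemma sin_mul_sin' (a b : ℝ) :
    Real.sin a * Real.sin b = (Real.cos (a-b) - Real.cos (a+b))/2 := by
  rw [Real.cos_sub, Real.cos_add]; ring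

private lemma not_dvd_of_bounds {m : ℕ} {k : ℤ} (h0 : k ≠ 0) (h1 : |k| < m) :
    ¬ ((m:ℤ) ∣ k) := by
  intro h
  have h2 : (m:ℤ) ≤ |k| := Int.le_of_dvd (abs_pos.mpr h0) ((dvd_abs _ _).mpr h)
  omega

private lemma sin_orth (n : ℕ) (c c' : ℕ) (hc : c < n) (hc' : c' < n) :
    ∑ j ∈ Finset.range n,
      Real.sin (2*π*(c+1)*(j+1)/((2*n+1:ℕ):ℝ)) * Real.sin (2*π*(c'+1)*(j+1)/((2*n+1:ℕ):ℝ))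
    = if c = c' then ((2*n+1:ℕ):ℝ)/4 else 0 := by
  set m : ℕ := 2*n+1 with hmdef
  have step : ∀ j : ℕ, Real.sin (2*π*(c+1)*(j+1)/(m:ℝ)) * Real.sin (2*π*(c'+1)*(j+1)/(m:ℝ))
      = (Real.cos (2 * π * ((((c:ℤ)-(c':ℤ) : ℤ)):ℝ) * (j+1) / m)
         - Real.cos (2 * π * ((((c:ℤ)+(c':ℤ)+2 : ℤ)):ℝ) * (j+1) / m))/2 := by
    intro j
    rw [sin_mul_sin']
    have hm0 : (m:ℝ) ≠ 0 := by positivity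
    congr 2
    · push_cast; field_simp; ring
    · push_cast; field_simp; ring
  simp only [step]
  rw [← Finset.sum_div, Finset.sum_sub_distrib]
  have hk2 : ∑ j ∈ Finset.range n, Real.cos (2 * π * ((((c:ℤ)+(c':ℤ)+2 : ℤ)):ℝ) * (j+1) / m) = -(1/2) := by
    exact half_cos_sum n ((c:ℤ)+c'+2)
      (not_dvd_of_bounds (by omega) (by rw [abs_of_nonneg (by omega)]; push_cast [hmdef]; omega))
  by_cases h : c = c'
  · subst h
    simp only [if_pos rfl]
    have hk1 : ∑ j ∈ Finset.range n, Real.cos (2 * π * ((((c:ℤ)-(c:ℤ) : ℤ)):ℝ) * (j+1) / m) = n := by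
      simp
    rw [hk1, hk2]
    push_cast [hmdef]
    ring
  · simp only [if_neg h]
    have hk1 : ∑ j ∈ Finset.range n, Real.cos (2 * π * ((((c:ℤ)-(c':ℤ) : ℤ)):ℝ) * (j+1) / m) = -(1/2) := by
      exact half_cos_sum n ((c:ℤ)-c')
        (not_dvd_of_bounds (by omega) (by rw [abs_sub_lt_iff]; push_cast [hmdef]; omega))
    rw [hk1, hk2]
    ring

/-- for odd `m`, the `(m-1)/2 × (m-1)/2` matrix with entries
`B(c,j) = sin(2πcj/m)`, `c, j = 1, …, (m-1)/2`, is invertible. -/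
theorem sine_matrix_invertible (m : ℕ) (hodd : Odd m) :
    IsUnit (Matrix.of fun c j : Fin ((m - 1) / 2) =>
      Real.sin (2 * Real.pi * ((c : ℕ) + 1) * ((j : ℕ) + 1) / m)) := by
  obtain ⟨t, ht⟩ := hodd
  set n := (m - 1) / 2 with hndef
  have hm : m = 2*n+1 := by omega
  set B := Matrix.of (fun c j : Fin n =>
      Real.sin (2 * Real.pi * ((c : ℕ) + 1) * ((j : ℕ) + 1) / m)) with hB
  rw [Matrix.isUnit_iff_isUnit_det, isUnit_iff_ne_zero]
  have hmr : (m:ℝ) = ((2*n+1:ℕ):ℝ) := by rw [hm]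
  have hBBt : B * Bᵀ = (((m:ℝ))/4) • (1 : Matrix (Fin n) (Fin n) ℝ) := by
    ext c c'
    rw [Matrix.mul_apply]
    simp only [Matrix.transpose_apply, hB, Matrix.of_apply, Matrix.smul_apply,
      Matrix.one_apply, smul_eq_mul]
    rw [Fin.sum_univ_eq_sum_range (fun j : ℕ =>
      Real.sin (2 * Real.pi * ((c:ℕ) + 1) * ((j:ℕ) + 1) / m)
        * Real.sin (2 * Real.pi * ((c':ℕ) + 1) * ((j:ℕ) + 1) / m)) n]
    rw [hmr]
    rw [sin_orth n c c' c.isLt c'.isLt]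
    rcases eq_or_ne c c' with h | h
    · simp [h, Fin.val_inj]
    · rw [if_neg (by simpa [Fin.val_inj] using h), if_neg h, mul_zero]
  have hdet := congrArg Matrix.det hBBt
  rw [Matrix.det_mul, Matrix.det_transpose, Matrix.det_smul, Matrix.det_one, mul_one,
    Fintype.card_fin] at hdet
  intro h
  rw [h, mul_zero] at hdet
  have hm0 : (0:ℝ) < (m:ℝ)/4 := by
    have : 0 < m := by omega
    positivity
  exact absurd hdet.symm (ne_of_gt (pow_pos hm0 _))
end

section
/- Suppose â ∈ C¹ on (0,1/2) is real, symmetric (â(ξ)=â(1−ξ)), strictly decreasing on [0,1/2], with |â| ≤ 1, and â′ nonzero on (0,1/2). Let γ = min over M = [1/(4mn), 1/2 − 1/(4mn)] of |â′|, and let ξ ∈ J = [1/(4n), 1/2 − 1/(4n)] ∪ [1/2 + 1/(4n), 1 − 1/(4n)]. Then for all 0 ≤ i < j ≤ m−1, |â((ξ+j)/m) − â((ξ+i)/m)| ≥ γ/(2mn). -/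
set_option maxHeartbeats 1600000

/-- for `â` real, symmetric, strictly decreasing on `[0,1/2]`, `|â| ≤ 1`,
`C¹` with nonvanishing derivative on `(0,1/2)`, with
`γ = min_{M} |â′|`, `M = [1/(4mn), 1/2 - 1/(4mn)]`, and
`ξ ∈ J = [1/(4n), 1/2 - 1/(4n)] ∪ [1/2 + 1/(4n), 1 - 1/(4n)]`:
for all `0 ≤ i < j ≤ m-1`, `|â((ξ+j)/m) - â((ξ+i)/m)| ≥ γ/(2mn)`. -/
theorem node_separation (m n : ℕ) (hm : 1 ≤ m) (hn : 1 ≤ n) (a : ℝ → ℝ)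
    (hper : Function.Periodic a 1) (hsymm : ∀ ξ : ℝ, a (1 - ξ) = a ξ)
    (hdec : StrictAntiOn a (Set.Icc 0 (1 / 2)))
    (hbd : ∀ ξ : ℝ, |a ξ| ≤ 1)
    (hC1 : ContDiffOn ℝ 1 a (Set.Ioo 0 (1 / 2)))
    (hd : ∀ x ∈ Set.Ioo (0 : ℝ) (1 / 2), deriv a x ≠ 0)
    (γ : ℝ)
    (hγ : IsLeast ((fun x => |deriv a x|) ''
      Set.Icc (1 / (4 * (m : ℝ) * n)) (1 / 2 - 1 / (4 * (m : ℝ) * n))) γ)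
    (ξ : ℝ)
    (hξ : ξ ∈ Set.Icc (1 / (4 * (n : ℝ))) (1 / 2 - 1 / (4 * (n : ℝ))) ∪
      Set.Icc (1 / 2 + 1 / (4 * (n : ℝ))) (1 - 1 / (4 * (n : ℝ))))
    (i j : ℕ) (hij : i < j) (hj : j ≤ m - 1) :
    γ / (2 * (m : ℝ) * n) ≤ |a ((ξ + j) / m) - a ((ξ + i) / m)| := by
  have hm' : (1:ℝ) ≤ m := by exact_mod_cast hm
  have hn' : (1:ℝ) ≤ n := by exact_mod_cast hn
  have hmpos : (0:ℝ) < m := by linarith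
  have hnpos : (0:ℝ) < n := by linarith
  set ε : ℝ := 1 / (4 * (m:ℝ) * n) with hε
  set δ : ℝ := 1 / (4 * (n:ℝ)) with hδ
  have εpos : 0 < ε := by positivity
  have δpos : 0 < δ := by positivity
  have e1 : ε * m = δ := by rw [hε, hδ]; field_simp
  have hδ4 : δ ≤ 1/4 := by
    rw [hδ, div_le_div_iff₀ (by positivity) (by norm_num)]; linarith
  have hεδ : ε ≤ δ := by
    rw [hε, hδ]
    apply div_le_div_of_nonneg_left (by norm_num) (by positivity)
    nlinarith
  -- γ is nonnegative
  obtain ⟨x₀, -, hx₀⟩ := hγ.1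
  have γ0 : 0 ≤ γ := hx₀ ▸ abs_nonneg _
  -- Mean value theorem bound on M = [ε, 1/2 - ε]
  have key : ∀ x y : ℝ, ε ≤ x → x < y → y ≤ 1/2 - ε → γ * (y - x) ≤ |a y - a x| := by
    intro x y hx hxy hy
    have hsub : Set.Icc x y ⊆ Set.Ioo 0 (1/2) := by
      intro z hz
      exact ⟨by linarith [hz.1], by linarith [hz.2]⟩
    have hdiff : DifferentiableOn ℝ a (Set.Ioo 0 (1/2)) := hC1.differentiableOn one_ne_zero
    have hdz : ∀ z ∈ Set.Icc x y, DifferentiableAt ℝ a z := by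
      intro z hz
      exact (hdiff z (hsub hz)).differentiableAt (isOpen_Ioo.mem_nhds (hsub hz))
    obtain ⟨c, hc, hc2⟩ := exists_deriv_eq_slope a hxy
      (fun z hz => ((hdz z hz).continuousAt).continuousWithinAt)
      (fun z hz => (hdz z (Set.Ioo_subset_Icc_self hz)).differentiableWithinAt)
    have hγc : γ ≤ |deriv a c| := hγ.2 ⟨c, ⟨hx.trans hc.1.le, hc.2.le.trans hy⟩, rfl⟩
    have hne : y - x ≠ 0 := by linarith
    have heq : a y - a x = deriv a c * (y - x) := by
      rw [hc2]; field_simp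
    rw [heq, abs_mul, abs_of_pos (by linarith : (0:ℝ) < y - x)]
    exact mul_le_mul_of_nonneg_right hγc (by linarith)
  -- distance of 2ξ from any integer is at least 2δ
  have hint : ∀ q : ℤ, 2*δ ≤ |2*ξ - q| := by
    intro q
    rcases hξ with h | h
    · obtain ⟨h1, h2⟩ := h
      rcases le_or_gt (q:ℝ) 0 with hq | hq
      · exact le_abs.mpr (Or.inl (by linarith))
      · have hq' : 0 < q := by exact_mod_cast hq
        have hq1 : (1:ℝ) ≤ q := by exact_mod_cast hq'
        exact le_abs.mpr (Or.inr (by linarith))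
    · obtain ⟨h1, h2⟩ := h
      rcases le_or_gt (q:ℝ) 1 with hq | hq
      · exact le_abs.mpr (Or.inl (by linarith))
      · have hq' : 1 < q := by exact_mod_cast hq
        have hq1 : (2:ℝ) ≤ q := by exact_mod_cast hq'
        exact le_abs.mpr (Or.inr (by linarith))
  -- each node is at distance ≥ ε from 1/2
  have side : ∀ k : ℕ, (ξ + k)/m ≤ 1/2 - ε ∨ 1/2 + ε ≤ (ξ + k)/m := by
    intro k
    have h := hint ((m:ℤ) - 2*k)
    have hcast : (((m:ℤ) - 2*k : ℤ) : ℝ) = (m:ℝ) - 2*k := by push_cast; ring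
    rw [hcast] at h
    rcases le_abs.mp h with h' | h'
    · right
      rw [le_div_iff₀ hmpos]
      nlinarith [e1]
    · left
      rw [div_le_iff₀ hmpos]
      nlinarith [e1]
  have hξδ : δ ≤ ξ := by rcases hξ with h | h; exacts [h.1, by linarith [h.1]]
  have hξδ' : ξ ≤ 1 - δ := by rcases hξ with h | h; exacts [by linarith [h.2], h.2]
  have lb : ∀ k : ℕ, ε ≤ (ξ + k)/m := by
    intro k
    rw [le_div_iff₀ hmpos]
    have : (0:ℝ) ≤ k := Nat.cast_nonneg k
    nlinarith [e1]
  have hjm : (j:ℝ) ≤ (m:ℝ) - 1 := by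
    have h1 : j + 1 ≤ m := by omega
    have h2 : ((j:ℝ) + 1) ≤ m := by exact_mod_cast h1
    linarith
  have ub : (ξ + j)/m ≤ 1 - ε := by
    rw [div_le_iff₀ hmpos]
    nlinarith [e1]
  have hijR : (i:ℝ) < j := by exact_mod_cast hij
  have hij1 : (i:ℝ) + 1 ≤ j := by exact_mod_cast hij
  have hiR : (0:ℝ) ≤ i := Nat.cast_nonneg i
  have hlt : (ξ + i)/m < (ξ + j)/m := by
    exact (div_lt_div_iff_of_pos_right hmpos).mpr (by linarith)
  have hgapm : 1/(m:ℝ) ≤ (ξ + j)/m - (ξ + i)/m := by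
    have : (ξ + j)/m - (ξ + i)/m = ((j:ℝ) - i)/m := by ring
    rw [this, div_le_div_iff₀ hmpos hmpos]
    linarith [mul_le_mul_of_nonneg_right (show (1:ℝ) ≤ (j:ℝ)-i by linarith) hmpos.le]
  have hmle : (m:ℝ) ≤ 2*m*n := by
    have h := mul_le_mul_of_nonneg_left hn' hmpos.le
    nlinarith [h]
  have h2mn : 1/(2*(m:ℝ)*n) ≤ 1/(m:ℝ) := one_div_le_one_div_of_le hmpos hmle
  have hfin : ∀ t : ℝ, 1/(2*(m:ℝ)*n) ≤ t → γ * t ≤ |a ((ξ + j)/m) - a ((ξ + i)/m)| →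
      γ / (2 * (m:ℝ) * n) ≤ |a ((ξ + j)/m) - a ((ξ + i)/m)| := by
    intro t ht h
    calc γ / (2 * (m:ℝ) * n) = γ * (1/(2*(m:ℝ)*n)) := by ring
    _ ≤ γ * t := mul_le_mul_of_nonneg_left ht γ0
    _ ≤ _ := h
  rcases side i with si | si
  · rcases side j with sj | sj
    · -- both nodes in [ε, 1/2-ε]
      exact hfin _ (by linarith) (key _ _ (lb i) hlt sj)
    · -- mixed case
      have h := hint ((m:ℤ) - i - j)
      have hcast : (((m:ℤ) - i - j : ℤ) : ℝ) = (m:ℝ) - i - j := by push_cast; ring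
      rw [hcast] at h
      have hdiffval : (ξ + i)/m - (1 - (ξ + j)/m) = (2*ξ - ((m:ℝ) - i - j))/m := by
        field_simp; ring
      have hgap : 2*δ/m ≤ |(ξ + i)/m - (1 - (ξ + j)/m)| := by
        rw [hdiffval, abs_div, abs_of_pos hmpos]
        exact (div_le_div_iff_of_pos_right hmpos).mpr h
      have h2δm : 2*δ/m = 1/(2*(m:ℝ)*n) := by
        rw [hδ]; field_simp; ring
      have hubj : 1 - (ξ + j)/m ≤ 1/2 - ε := by linarith
      have hlbj : ε ≤ 1 - (ξ + j)/m := by linarith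
      have hsymj : a (1 - (ξ + j)/m) = a ((ξ + j)/m) := hsymm _
      rcases lt_trichotomy ((ξ + i)/m) (1 - (ξ + j)/m) with hc | hc | hc
      · have hk := key _ _ (lb i) hc hubj
        rw [hsymj] at hk
        refine hfin (1 - (ξ + j)/m - (ξ + i)/m) ?_ hk
        rw [abs_of_neg (by linarith)] at hgap
        linarith [h2δm.symm.le.trans hgap]
      · exfalso
        rw [hc, sub_self, abs_zero] at hgap
        have : 0 < 2*δ/m := by positivity
        linarith
      · have hk := key _ _ hlbj hc si
        rw [hsymj] at hk
        rw [abs_sub_comm] at hk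
        refine hfin ((ξ + i)/m - (1 - (ξ + j)/m)) ?_ hk
        rw [abs_of_pos (by linarith)] at hgap
        linarith [h2δm.symm.le.trans hgap]
  · -- both nodes in [1/2+ε, 1-ε]
    have sj : 1/2 + ε ≤ (ξ + j)/m := by linarith
    have hk := key (1 - (ξ + j)/m) (1 - (ξ + i)/m) (by linarith) (by linarith) (by linarith)
    rw [hsymm, hsymm] at hk
    refine hfin ((1 - (ξ + i)/m) - (1 - (ξ + j)/m)) (by linarith) ?_
    rwa [abs_sub_comm] at hk
end
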